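/- Let G ⊆ K_{m,n} be a connected bipartite graph and let A, B ∈ I_G^(1) be first independent sets. If H_A ∩ σ_G^∨ = H_B ∩ σ_G^∨, where H_A denotes the supporting hyperplane H_{A₁} of a nonempty one-sided part A₁ of A (and likewise for B), then A = B. In other words, the map sending a first independent set A to the facet H_A ∩ σ_G^∨ of σ_G^∨ is injective. -/

import Mathlib

/-!
Common setup: a bipartite graph `G ⊆ K_{m,n}` is encoded by an edge relation
`E : Fin m → Fin n → Prop` (vertex set `V = Fin m ⊕ Fin n`, with `U₁` the left
summand and `U₂` the right summand).
-/

namespace ToricBipartite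

open Sum Finset

variable {m n : ℕ}

/-- The simple graph on `Fin m ⊕ Fin n` determined by the bipartite edge relation `E`. -/
def toGraph (E : Fin m → Fin n → Prop) : SimpleGraph (Fin m ⊕ Fin n) where
  Adj u v :=
    (∃ i j, u = inl i ∧ v = inr j ∧ E i j) ∨ (∃ i j, u = inr j ∧ v = inl i ∧ E i j)
  symm := by
    constructor; rintro u v (⟨i, j, hu, hv, h⟩ | ⟨i, j, hu, hv, h⟩)
    · exact Or.inr ⟨i, j, hv, hu, h⟩
    · exact Or.inl ⟨i, j, hv, hu, h⟩
  loopless := by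
    constructor; rintro u (⟨i, j, hu, hv, h⟩ | ⟨i, j, hu, hv, h⟩) <;> rw [hu] at hv <;> simp at hv

/-- The generator `e^i + f^j` of the dual edge cone. -/
def gen (i : Fin m) (j : Fin n) : (Fin m ⊕ Fin n) → ℝ :=
  Pi.single (inl i) 1 + Pi.single (inr j) 1

/-- The set of generators `{e^i + f^j : (i, m+j) ∈ E(G)}` of the dual edge cone. -/
def genSet (E : Fin m → Fin n → Prop) : Set ((Fin m ⊕ Fin n) → ℝ) :=
  {x | ∃ i j, E i j ∧ x = gen i j}

/-- The dual edge cone `σ_G^∨ ⊆ ℝ^{m+n}`: all nonnegative combinations of the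
generators `e^i + f^j` over the edges of `G`. -/
def dualEdgeCone (E : Fin m → Fin n → Prop) : Set ((Fin m ⊕ Fin n) → ℝ) :=
  {x | ∃ c : Fin m → Fin n → ℝ, (∀ i j, 0 ≤ c i j) ∧ (∀ i j, c i j ≠ 0 → E i j) ∧
      x = ∑ i, ∑ j, c i j • gen i j}

/-- The neighbour set `N(A) ⊆ U₂` of a set `A ⊆ U₁`. -/
def nbrR (E : Fin m → Fin n → Prop) [∀ i j, Decidable (E i j)]
    (A : Finset (Fin m)) : Finset (Fin n) :=
  univ.filter fun j => ∃ i ∈ A, E i j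

/-- The neighbour set `N(B) ⊆ U₁` of a set `B ⊆ U₂`. -/
def nbrL (E : Fin m → Fin n → Prop) [∀ i j, Decidable (E i j)]
    (B : Finset (Fin n)) : Finset (Fin m) :=
  univ.filter fun i => ∃ j ∈ B, E i j

/-- `A₁ ⊔ A₂ ⊆ U₁ ⊔ U₂` contains no pair of adjacent vertices (since the graph is
bipartite this says there is no edge between `A₁` and `A₂`). -/
def IsIndepPair (E : Fin m → Fin n → Prop)
    (A₁ : Finset (Fin m)) (A₂ : Finset (Fin n)) : Prop :=
  ∀ i ∈ A₁, ∀ j ∈ A₂, ¬ E i j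

/-- A two-sided independent set `B₁ ⊔ B₂`, with `∅ ≠ B₁ ⊊ U₁` and `∅ ≠ B₂ ⊊ U₂`. -/
def TwoSidedIndep (E : Fin m → Fin n → Prop)
    (B₁ : Finset (Fin m)) (B₂ : Finset (Fin n)) : Prop :=
  B₁.Nonempty ∧ B₁ ≠ univ ∧ B₂.Nonempty ∧ B₂ ≠ univ ∧ IsIndepPair E B₁ B₂

/-- A two-sided *maximal* independent set: two-sided independent, and contained in no
strictly larger independent set of the graph. -/
def TwoSidedMaxIndep (E : Fin m → Fin n → Prop)
    (A₁ : Finset (Fin m)) (A₂ : Finset (Fin n)) : Prop :=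
  TwoSidedIndep E A₁ A₂ ∧
    ∀ B₁ B₂, IsIndepPair E B₁ B₂ → A₁ ⊆ B₁ → A₂ ⊆ B₂ → B₁ = A₁ ∧ B₂ = A₂

/-- Membership in `I_G^(*)`: either a two-sided maximal independent set, or a one-sided
independent set of the form `U_i ∖ {v}` not contained in any two-sided independent set.
A set is encoded as the pair of its parts `(A₁, A₂) = (A ∩ U₁, A ∩ U₂)`. -/
def InIStar (E : Fin m → Fin n → Prop)
    (A₁ : Finset (Fin m)) (A₂ : Finset (Fin n)) : Prop :=
  TwoSidedMaxIndep E A₁ A₂ ∨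
    (A₂ = ∅ ∧ A₁.Nonempty ∧ (∃ v, A₁ = {v}ᶜ) ∧
      ¬ ∃ B₁ B₂, TwoSidedIndep E B₁ B₂ ∧ A₁ ⊆ B₁) ∨
    (A₁ = ∅ ∧ A₂.Nonempty ∧ (∃ v, A₂ = {v}ᶜ) ∧
      ¬ ∃ B₁ B₂, TwoSidedIndep E B₁ B₂ ∧ A₂ ⊆ B₂)

/-- The edge relation of the associated (spanning) subgraph `G{A}` of `A ∈ I_G^(*)`:
for one-sided `A = A₁ ⊆ U₁` the edges of `G[A₁ ⊔ N(A₁)] ⊔ G[(U₁∖A₁) ⊔ (U₂∖N(A₁))]`,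
symmetrically for one-sided `A = A₂ ⊆ U₂`, and for two-sided `A = A₁ ⊔ A₂` the edges of
`G[A₁ ⊔ N(A₁)] ⊔ G[A₂ ⊔ N(A₂)]`. -/
def assoc (E : Fin m → Fin n → Prop) [∀ i j, Decidable (E i j)]
    (A₁ : Finset (Fin m)) (A₂ : Finset (Fin n)) : Fin m → Fin n → Prop := fun i j =>
  E i j ∧
    (if A₂ = ∅ then i ∈ A₁ ∨ j ∉ nbrR E A₁
     else if A₁ = ∅ then j ∈ A₂ ∨ i ∉ nbrL E A₂
     else i ∈ A₁ ∨ j ∈ A₂)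

instance (E : Fin m → Fin n → Prop) [∀ i j, Decidable (E i j)]
    (A₁ : Finset (Fin m)) (A₂ : Finset (Fin n)) (i : Fin m) (j : Fin n) :
    Decidable (assoc E A₁ A₂ i j) := by
  unfold assoc; infer_instance

/-- The number of connected components of the bipartite graph with edge relation `E`
(isolated vertices count as connected components). -/
noncomputable def numComponents (E : Fin m → Fin n → Prop) : ℕ :=
  Nat.card (toGraph E).ConnectedComponent

/-- `A ∈ I_G^(1)`: a first independent set, i.e. an element of `I_G^(*)` whose associated
subgraph `G{A}` has exactly two connected components. -/
def FirstIndep (E : Fin m → Fin n → Prop) [∀ i j, Decidable (E i j)]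
    (A₁ : Finset (Fin m)) (A₂ : Finset (Fin n)) : Prop :=
  InIStar E A₁ A₂ ∧ numComponents (assoc E A₁ A₂) = 2

/-- The supporting hyperplane `H_{A₁}` of a one-sided set `A₁ ⊆ U₁`:
`Σ_{v ∈ A₁} x_v = Σ_{v ∈ N(A₁)} x_v`. -/
def hyp1 (E : Fin m → Fin n → Prop) [∀ i j, Decidable (E i j)]
    (A₁ : Finset (Fin m)) : Set ((Fin m ⊕ Fin n) → ℝ) :=
  {x | ∑ i ∈ A₁, x (inl i) = ∑ j ∈ nbrR E A₁, x (inr j)}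

/-- The supporting hyperplane `H_{A₂}` of a one-sided set `A₂ ⊆ U₂`. -/
def hyp2 (E : Fin m → Fin n → Prop) [∀ i j, Decidable (E i j)]
    (A₂ : Finset (Fin n)) : Set ((Fin m ⊕ Fin n) → ℝ) :=
  {x | ∑ j ∈ A₂, x (inr j) = ∑ i ∈ nbrL E A₂, x (inl i)}

/-- The supporting hyperplane `H_A` of `A = A₁ ⊔ A₂`, taken with respect to a nonempty
one-sided part of `A`. -/
def hypA (E : Fin m → Fin n → Prop) [∀ i j, Decidable (E i j)]
    (A₁ : Finset (Fin m)) (A₂ : Finset (Fin n)) : Set ((Fin m ⊕ Fin n) → ℝ) :=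
  if A₁ = ∅ then hyp2 E A₂ else hyp1 E A₁

/-- Connectivity of the induced subgraph `G[S ⊔ T]` for `S ⊆ U₁`, `T ⊆ U₂`. -/
def InducedConnected (E : Fin m → Fin n → Prop)
    (S : Finset (Fin m)) (T : Finset (Fin n)) : Prop :=
  ((toGraph E).induce
    ((inl '' (S : Set (Fin m)) ∪ inr '' (T : Set (Fin n))) : Set (Fin m ⊕ Fin n))).Connected

/-- The degree (valency) sequence of the bipartite graph with edge relation `E`,
as a vector in `ℝ^{m+n}`. -/
def valVec (E : Fin m → Fin n → Prop) [∀ i j, Decidable (E i j)] :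
    (Fin m ⊕ Fin n) → ℝ :=
  Sum.elim (fun i => ((univ.filter fun j => E i j).card : ℝ))
    (fun j => ((univ.filter fun i => E i j).card : ℝ))

/-! ### Auxiliary machinery for the proof -/

section Aux

/-- A vertex set is closed under adjacency. -/
def Cl {V : Type*} (G : SimpleGraph V) (S : Set V) : Prop :=
  ∀ u v, G.Adj u v → (u ∈ S ↔ v ∈ S)

lemma cl_compl {V : Type*} {G : SimpleGraph V} {S : Set V} (h : Cl G S) : Cl G Sᶜ :=
  fun u v a => not_congr (h u v a)

lemma cl_inter {V : Type*} {G : SimpleGraph V} {S T : Set V} (hS : Cl G S) (hT : Cl G T) :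
    Cl G (S ∩ T) := fun u v a => and_congr (hS u v a) (hT u v a)

lemma cl_reachable {V : Type*} {G : SimpleGraph V} {S : Set V} (h : Cl G S)
    {u v : V} (r : G.Reachable u v) : u ∈ S ↔ v ∈ S := by
  obtain ⟨w⟩ := r
  induction w with
  | nil => exact Iff.rfl
  | cons a _ ih => exact (h _ _ a).trans ih

lemma conn_no_closed {V : Type*} {G : SimpleGraph V} (hc : G.Connected) {S : Set V}
    (h : Cl G S) (hs : S.Nonempty) (hsc : Sᶜ.Nonempty) : False := by
  obtain ⟨u, hu⟩ := hs
  obtain ⟨v, hv⟩ := hsc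
  exact hv ((cl_reachable h (hc.preconnected u v)).mp hu)

lemma three_le {V : Type*} [Finite V] {G : SimpleGraph V} {S T : Set V}
    (hS : Cl G S) (hT : Cl G T) {s t w : V} (hs : s ∈ S) (ht : t ∈ T)
    (hts : t ∉ S) (hws : w ∉ S) (hwt : w ∉ T) :
    3 ≤ Nat.card G.ConnectedComponent := by
  have h1 : G.connectedComponentMk s ≠ G.connectedComponentMk t := fun h =>
    hts ((cl_reachable hS (SimpleGraph.ConnectedComponent.exact h)).mp hs)
  have h2 : G.connectedComponentMk s ≠ G.connectedComponentMk w := fun h =>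
    hws ((cl_reachable hS (SimpleGraph.ConnectedComponent.exact h)).mp hs)
  have h3 : G.connectedComponentMk t ≠ G.connectedComponentMk w := fun h =>
    hwt ((cl_reachable hT (SimpleGraph.ConnectedComponent.exact h)).mp ht)
  have hf : Function.Injective
      (fun k : Fin 3 => ![G.connectedComponentMk s, G.connectedComponentMk t,
        G.connectedComponentMk w] k) := by
    intro a b hab
    fin_cases a <;> fin_cases b <;> simp_all <;>
      first
        | exact h1 hab.symm
        | exact h2 hab.symm
        | exact h3 hab.symm
  calc (3:ℕ) = Nat.card (Fin 3) := by simp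
    _ ≤ _ := Nat.card_le_card_of_injective _ hf

lemma key_two_components {V : Type*} [Finite V] {G : SimpleGraph V} {S₁ S₂ : Set V}
    (h1 : Cl G S₁) (h2 : Cl G S₂)
    (n1 : S₁.Nonempty) (n1c : S₁ᶜ.Nonempty) (n2 : S₂.Nonempty) (n2c : S₂ᶜ.Nonempty)
    (hc : Nat.card G.ConnectedComponent = 2) : S₂ = S₁ ∨ S₂ = S₁ᶜ := by
  have claim : ∀ T W : Set V, Cl G T → Cl G W → T.Nonempty → W.Nonempty →
      (∀ x ∈ W, x ∉ T) → (∃ z, z ∉ T ∧ z ∉ W) → False := by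
    rintro T W hT hW ⟨t0, ht0⟩ ⟨w0, hw0⟩ hdis ⟨z0, hz1, hz2⟩
    have := three_le hT hW ht0 hw0 (hdis _ hw0) hz1 hz2
    omega
  by_cases hst : (S₁ ∩ S₂ᶜ).Nonempty
  · -- then S₁ ∩ S₂ = ∅
    have he : S₁ ∩ S₂ = ∅ := by
      by_contra hne
      obtain ⟨z, hz⟩ := n1c
      exact claim (S₁ ∩ S₂) (S₁ ∩ S₂ᶜ) (cl_inter h1 h2) (cl_inter h1 (cl_compl h2))
        (Set.nonempty_iff_ne_empty.mpr hne) hst (fun x hx h => hx.2 h.2)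
        ⟨z, fun h => hz h.1, fun h => hz h.1⟩
    have he2 : S₁ᶜ ∩ S₂ᶜ = ∅ := by
      by_contra hne
      obtain ⟨s, hsS⟩ := n1
      have hsn : s ∉ S₂ := fun h => (Set.eq_empty_iff_forall_notMem.mp he s) ⟨hsS, h⟩
      have hn2' : (S₁ᶜ ∩ S₂).Nonempty := by
        obtain ⟨y, hy⟩ := n2
        refine ⟨y, fun h => (Set.eq_empty_iff_forall_notMem.mp he y) ⟨h, hy⟩, hy⟩
      exact claim (S₁ᶜ ∩ S₂) (S₁ᶜ ∩ S₂ᶜ) (cl_inter (cl_compl h1) h2)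
        (cl_inter (cl_compl h1) (cl_compl h2))
        hn2' (Set.nonempty_iff_ne_empty.mpr hne) (fun x hx h => hx.2 h.2)
        ⟨s, fun h => h.1 hsS, fun h => h.1 hsS⟩
    right
    ext x
    constructor
    · intro hx h1x
      exact Set.eq_empty_iff_forall_notMem.mp he x ⟨h1x, hx⟩
    · intro hx
      by_contra h2x
      exact Set.eq_empty_iff_forall_notMem.mp he2 x ⟨hx, h2x⟩
  · -- S₁ ⊆ S₂
    have hsub : S₁ ⊆ S₂ := by
      intro x hx
      by_contra h
      exact hst ⟨x, hx, h⟩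
    have he2 : S₁ᶜ ∩ S₂ = ∅ := by
      by_contra hne
      obtain ⟨z, hz⟩ := n2c
      obtain ⟨s, hsS⟩ := n1
      exact claim (S₁ ∩ S₂) (S₁ᶜ ∩ S₂) (cl_inter h1 h2) (cl_inter (cl_compl h1) h2)
        ⟨s, hsS, hsub hsS⟩ (Set.nonempty_iff_ne_empty.mpr hne) (fun x hx h => hx.1 h.1)
        ⟨z, fun h => hz h.2, fun h => hz h.2⟩
    left
    ext x
    constructor
    · intro hx
      by_contra h1x
      exact Set.eq_empty_iff_forall_notMem.mp he2 x ⟨h1x, hx⟩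
    · intro hx
      exact hsub hx

/-- The vertex subset of `Fin m ⊕ Fin n` determined by a pair of finsets. -/
def sideSet (P : Finset (Fin m)) (Q : Finset (Fin n)) : Set (Fin m ⊕ Fin n) :=
  Sum.elim (fun i => i ∈ P) (fun j => j ∈ Q)

lemma mem_sideSet_inl {P : Finset (Fin m)} {Q : Finset (Fin n)} {i : Fin m} :
    (inl i : Fin m ⊕ Fin n) ∈ sideSet P Q ↔ i ∈ P := Iff.rfl

lemma mem_sideSet_inr {P : Finset (Fin m)} {Q : Finset (Fin n)} {j : Fin n} :
    (inr j : Fin m ⊕ Fin n) ∈ sideSet P Q ↔ j ∈ Q := Iff.rfl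

lemma sideSet_compl (P : Finset (Fin m)) (Q : Finset (Fin n)) :
    (sideSet P Q)ᶜ = sideSet Pᶜ Qᶜ := by
  ext x
  rw [Set.mem_compl_iff]
  cases x with
  | inl i => rw [mem_sideSet_inl, mem_sideSet_inl, Finset.mem_compl]
  | inr j => rw [mem_sideSet_inr, mem_sideSet_inr, Finset.mem_compl]

lemma sideSet_inj {P P' : Finset (Fin m)} {Q Q' : Finset (Fin n)}
    (h : sideSet P Q = sideSet P' Q') : P = P' ∧ Q = Q' := by
  constructor
  · ext i; exact Set.ext_iff.mp h (inl i)
  · ext j; exact Set.ext_iff.mp h (inr j)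

lemma toGraph_adj_cases {R : Fin m → Fin n → Prop} {u v : Fin m ⊕ Fin n}
    (h : (toGraph R).Adj u v) :
    ∃ i j, R i j ∧ ((u = inl i ∧ v = inr j) ∨ (u = inr j ∧ v = inl i)) := by
  rcases h with ⟨i, j, hu, hv, h⟩ | ⟨i, j, hu, hv, h⟩
  · exact ⟨i, j, h, Or.inl ⟨hu, hv⟩⟩
  · exact ⟨i, j, h, Or.inr ⟨hu, hv⟩⟩

lemma cl_sideSet {R : Fin m → Fin n → Prop} {P : Finset (Fin m)} {Q : Finset (Fin n)}
    (h : ∀ i j, R i j → (i ∈ P ↔ j ∈ Q)) : Cl (toGraph R) (sideSet P Q) := by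
  intro u v hadj
  obtain ⟨i, j, hR, (⟨rfl, rfl⟩ | ⟨rfl, rfl⟩)⟩ := toGraph_adj_cases hadj
  · exact h i j hR
  · exact (h i j hR).symm

lemma mem_nbrR_iff {E : Fin m → Fin n → Prop} [∀ i j, Decidable (E i j)]
    {A₁ : Finset (Fin m)} {j : Fin n} : j ∈ nbrR E A₁ ↔ ∃ i ∈ A₁, E i j := by
  simp [nbrR]

lemma mem_nbrL_iff {E : Fin m → Fin n → Prop} [∀ i j, Decidable (E i j)]
    {A₂ : Finset (Fin n)} {i : Fin m} : i ∈ nbrL E A₂ ↔ ∃ j ∈ A₂, E i j := by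
  simp [nbrL]

lemma mem_nbrR {E : Fin m → Fin n → Prop} [∀ i j, Decidable (E i j)]
    {A₁ : Finset (Fin m)} {i : Fin m} {j : Fin n} (hi : i ∈ A₁) (hE : E i j) :
    j ∈ nbrR E A₁ := mem_nbrR_iff.mpr ⟨i, hi, hE⟩

lemma mem_nbrL {E : Fin m → Fin n → Prop} [∀ i j, Decidable (E i j)]
    {A₂ : Finset (Fin n)} {i : Fin m} {j : Fin n} (hj : j ∈ A₂) (hE : E i j) :
    i ∈ nbrL E A₂ := mem_nbrL_iff.mpr ⟨j, hj, hE⟩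

lemma gen_mem_cone {E : Fin m → Fin n → Prop} {i : Fin m} {j : Fin n} (h : E i j) :
    gen i j ∈ dualEdgeCone E := by
  classical
  refine ⟨fun i' j' => if i' = i ∧ j' = j then 1 else 0, ?_, ?_, ?_⟩
  · intro i' j'; dsimp only; split <;> norm_num
  · intro i' j' hc
    by_cases hij : i' = i ∧ j' = j
    · obtain ⟨rfl, rfl⟩ := hij; exact h
    · simp [hij] at hc
  · rw [Finset.sum_eq_single i]
    · rw [Finset.sum_eq_single j]
      · simp
      · intro b _ hb; simp [hb]
      · simp
    · intro b _ hb
      apply Finset.sum_eq_zero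
      intro c _
      simp [hb]
    · simp

lemma gen_mem_hyp1_iff {E : Fin m → Fin n → Prop} [∀ i j, Decidable (E i j)]
    {A₁ : Finset (Fin m)} (i : Fin m) (j : Fin n) :
    gen i j ∈ hyp1 E A₁ ↔ (i ∈ A₁ ↔ j ∈ nbrR E A₁) := by
  have hl : ∑ i' ∈ A₁, gen i j (inl i') = if i ∈ A₁ then (1:ℝ) else 0 := by
    simp [gen, Pi.single_apply, Finset.sum_ite_eq']
  have hr : ∑ j' ∈ nbrR E A₁, gen i j (inr j') = if j ∈ nbrR E A₁ then (1:ℝ) else 0 := by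
    simp [gen, Pi.single_apply, Finset.sum_ite_eq']
  show _ ∈ {x : (Fin m ⊕ Fin n) → ℝ | _} ↔ _
  rw [Set.mem_setOf_eq, hl, hr]
  by_cases hi : i ∈ A₁ <;> by_cases hj : j ∈ nbrR E A₁ <;> simp [hi, hj]

lemma gen_mem_hyp2_iff {E : Fin m → Fin n → Prop} [∀ i j, Decidable (E i j)]
    {A₂ : Finset (Fin n)} (i : Fin m) (j : Fin n) :
    gen i j ∈ hyp2 E A₂ ↔ (i ∈ nbrL E A₂ ↔ j ∈ A₂) := by
  have hl : ∑ j' ∈ A₂, gen i j (inr j') = if j ∈ A₂ then (1:ℝ) else 0 := by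
    simp [gen, Pi.single_apply, Finset.sum_ite_eq']
  have hr : ∑ i' ∈ nbrL E A₂, gen i j (inl i') = if i ∈ nbrL E A₂ then (1:ℝ) else 0 := by
    simp [gen, Pi.single_apply, Finset.sum_ite_eq']
  show _ ∈ {x : (Fin m ⊕ Fin n) → ℝ | _} ↔ _
  rw [Set.mem_setOf_eq, hl, hr]
  by_cases hi : i ∈ nbrL E A₂ <;> by_cases hj : j ∈ A₂ <;> simp [hi, hj]

lemma maxIndep_right {E : Fin m → Fin n → Prop} [∀ i j, Decidable (E i j)]
    {A₁ : Finset (Fin m)} {A₂ : Finset (Fin n)} (h : TwoSidedMaxIndep E A₁ A₂) :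
    A₂ = (nbrR E A₁)ᶜ := by
  have hind : IsIndepPair E A₁ (nbrR E A₁)ᶜ := by
    intro i hi j hj hE
    exact (Finset.mem_compl.mp hj) (mem_nbrR hi hE)
  have hsub : A₂ ⊆ (nbrR E A₁)ᶜ := by
    intro j hj
    rw [Finset.mem_compl]
    intro hjn
    obtain ⟨i, hi, hE⟩ := mem_nbrR_iff.mp hjn
    exact h.1.2.2.2.2 i hi j hj hE
  exact ((h.2 A₁ (nbrR E A₁)ᶜ hind subset_rfl hsub).2).symm

/-- Facts about a member of `I_G^*` whose left part is nonempty. -/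
lemma left_facts {E : Fin m → Fin n → Prop} [∀ i j, Decidable (E i j)]
    {A₁ : Finset (Fin m)} {A₂ : Finset (Fin n)} (hstar : InIStar E A₁ A₂) (hne : A₁ ≠ ∅) :
    (∀ i j, assoc E A₁ A₂ i j ↔ (E i j ∧ (i ∈ A₁ ↔ j ∈ nbrR E A₁))) ∧
    hypA E A₁ A₂ = hyp1 E A₁ ∧ A₁.Nonempty ∧ A₁ ≠ Finset.univ ∧
    (TwoSidedMaxIndep E A₁ A₂ ∨
      (A₂ = ∅ ∧ ¬ ∃ B₁ B₂, TwoSidedIndep E B₁ B₂ ∧ A₁ ⊆ B₁)) := by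
  have hiff : ∀ (i : Fin m) (j : Fin n), E i j →
      ((i ∈ A₁ ∨ j ∉ nbrR E A₁) ↔ (i ∈ A₁ ↔ j ∈ nbrR E A₁)) := by
    intro i j hE
    constructor
    · rintro (hi | hj)
      · exact ⟨fun _ => mem_nbrR hi hE, fun _ => hi⟩
      · constructor
        · intro hi; exact absurd (mem_nbrR hi hE) hj
        · intro hjn; exact absurd hjn hj
    · intro h
      by_cases hi : i ∈ A₁
      · exact Or.inl hi
      · exact Or.inr (fun hj => hi (h.mpr hj))
  rcases hstar with hmax | ⟨hA2, hA1ne, ⟨v, hv⟩, hnc⟩ | ⟨hA1, _⟩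
  · have hA1ne := hmax.1.1
    have hA1u := hmax.1.2.1
    have hA2ne := hmax.1.2.2.1
    have hA2eq : A₂ = (nbrR E A₁)ᶜ := maxIndep_right hmax
    refine ⟨?_, ?_, hA1ne, hA1u, Or.inl hmax⟩
    · intro i j
      unfold assoc
      rw [if_neg (Finset.nonempty_iff_ne_empty.mp hA2ne), if_neg hne]
      constructor
      · rintro ⟨hE, h⟩
        refine ⟨hE, (hiff i j hE).mp ?_⟩
        rcases h with hi | hj
        · exact Or.inl hi
        · exact Or.inr (by rw [hA2eq] at hj; exact Finset.mem_compl.mp hj)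
      · rintro ⟨hE, h⟩
        refine ⟨hE, ?_⟩
        rcases (hiff i j hE).mpr h with hi | hj
        · exact Or.inl hi
        · exact Or.inr (by rw [hA2eq]; exact Finset.mem_compl.mpr hj)
    · unfold hypA; rw [if_neg hne]
  · refine ⟨?_, ?_, hA1ne, ?_, Or.inr ⟨hA2, hnc⟩⟩
    · intro i j
      unfold assoc
      rw [if_pos hA2]
      constructor
      · rintro ⟨hE, h⟩
        exact ⟨hE, (hiff i j hE).mp (h.imp id (fun hj => hj))⟩
      · rintro ⟨hE, h⟩
        refine ⟨hE, ?_⟩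
        rcases (hiff i j hE).mpr h with hi | hj
        · exact Or.inl hi
        · exact Or.inr hj
    · unfold hypA; rw [if_neg hne]
    · intro hu
      have : v ∈ A₁ := hu ▸ Finset.mem_univ v
      rw [hv] at this
      simp at this
  · exact absurd hA1 hne

/-- Facts about a member of `I_G^*` whose left part is empty. -/
lemma right_facts {E : Fin m → Fin n → Prop} [∀ i j, Decidable (E i j)]
    {A₁ : Finset (Fin m)} {A₂ : Finset (Fin n)} (hstar : InIStar E A₁ A₂) (he : A₁ = ∅) :
    (∀ i j, assoc E A₁ A₂ i j ↔ (E i j ∧ (i ∈ nbrL E A₂ ↔ j ∈ A₂))) ∧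
    hypA E A₁ A₂ = hyp2 E A₂ ∧ A₂.Nonempty ∧ A₂ ≠ Finset.univ ∧
    ¬ ∃ B₁ B₂, TwoSidedIndep E B₁ B₂ ∧ A₂ ⊆ B₂ := by
  rcases hstar with hmax | ⟨_, hA1ne, _, _⟩ | ⟨hA1, hA2ne, ⟨w, hw⟩, hnc⟩
  · exact absurd he (Finset.nonempty_iff_ne_empty.mp hmax.1.1)
  · exact absurd he (Finset.nonempty_iff_ne_empty.mp hA1ne)
  · have hiff : ∀ (i : Fin m) (j : Fin n), E i j →
        ((j ∈ A₂ ∨ i ∉ nbrL E A₂) ↔ (i ∈ nbrL E A₂ ↔ j ∈ A₂)) := by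
      intro i j hE
      constructor
      · rintro (hj | hi)
        · exact ⟨fun _ => hj, fun _ => mem_nbrL hj hE⟩
        · constructor
          · intro h; exact absurd h hi
          · intro hj; exact absurd (mem_nbrL hj hE) hi
      · intro h
        by_cases hj : j ∈ A₂
        · exact Or.inl hj
        · exact Or.inr (fun hi => hj (h.mp hi))
    refine ⟨?_, ?_, hA2ne, ?_, hnc⟩
    · intro i j
      unfold assoc
      rw [if_neg (Finset.nonempty_iff_ne_empty.mp hA2ne), if_pos hA1]
      constructor
      · rintro ⟨hE, h⟩
        exact ⟨hE, (hiff i j hE).mp h⟩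
      · rintro ⟨hE, h⟩
        exact ⟨hE, (hiff i j hE).mpr h⟩
    · unfold hypA; rw [if_pos hA1]
    · intro hu
      have : w ∈ A₂ := hu ▸ Finset.mem_univ w
      rw [hw] at this
      simp at this

lemma compl_ne_univ {α : Type*} [Fintype α] [DecidableEq α] (v : α) :
    ({v}ᶜ : Finset α) ≠ Finset.univ := by
  intro h
  have : v ∈ ({v}ᶜ : Finset α) := h ▸ Finset.mem_univ v
  simp at this


lemma finset_nonempty_compl {α : Type*} [Fintype α] [DecidableEq α] {s : Finset α}
    (h : s ≠ Finset.univ) : (sᶜ).Nonempty := by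
  by_contra hne
  rw [Finset.not_nonempty_iff_eq_empty] at hne
  apply h
  ext a
  simp only [Finset.mem_univ, iff_true]
  by_contra ha
  exact (Finset.eq_empty_iff_forall_notMem.mp hne a) (Finset.mem_compl.mpr ha)

lemma compl_ne_univ_of_nonempty {α : Type*} [Fintype α] [DecidableEq α] {s : Finset α}
    (h : s.Nonempty) : sᶜ ≠ Finset.univ := by
  obtain ⟨a, ha⟩ := h
  intro hu
  exact Finset.mem_compl.mp (hu ▸ Finset.mem_univ a) ha

lemma profiles_match {E : Fin m → Fin n → Prop} [∀ i j, Decidable (E i j)]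
    {A₁ : Finset (Fin m)} {A₂ : Finset (Fin n)}
    {PA PB : Finset (Fin m)} {QA QB : Finset (Fin n)}
    (hassocA : ∀ i j, assoc E A₁ A₂ i j ↔ (E i j ∧ (i ∈ PA ↔ j ∈ QA)))
    (htrans : ∀ i j, E i j → ((i ∈ PA ↔ j ∈ QA) ↔ (i ∈ PB ↔ j ∈ QB)))
    (hcomp : numComponents (assoc E A₁ A₂) = 2)
    (nA : (sideSet PA QA).Nonempty) (nAc : ((sideSet PA QA)ᶜ).Nonempty)
    (nB : (sideSet PB QB).Nonempty) (nBc : ((sideSet PB QB)ᶜ).Nonempty) :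
    (PB = PA ∧ QB = QA) ∨ (PB = PAᶜ ∧ QB = QAᶜ) := by
  have h1 : Cl (toGraph (assoc E A₁ A₂)) (sideSet PA QA) :=
    cl_sideSet (fun i j h => ((hassocA i j).mp h).2)
  have h2 : Cl (toGraph (assoc E A₁ A₂)) (sideSet PB QB) :=
    cl_sideSet (fun i j h => by
      obtain ⟨hE, hP⟩ := (hassocA i j).mp h
      exact (htrans i j hE).mp hP)
  rcases key_two_components h1 h2 nA nAc nB nBc hcomp with h | h
  · exact Or.inl (sideSet_inj h)
  · rw [sideSet_compl] at h
    exact Or.inr (sideSet_inj h)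

end Aux

/-- The map sending a first independent set `A ∈ I_G^(1)` of a connected
bipartite graph `G ⊆ K_{m,n}` to the facet `H_A ∩ σ_G^∨` of `σ_G^∨` is injective:
if `H_A ∩ σ_G^∨ = H_B ∩ σ_G^∨` for `A, B ∈ I_G^(1)`, then `A = B`. -/
theorem firstIndep_facet_injective (m n : ℕ) (E : Fin m → Fin n → Prop)
    [∀ i j, Decidable (E i j)] (hconn : (toGraph E).Connected)
    (A₁ B₁ : Finset (Fin m)) (A₂ B₂ : Finset (Fin n))
    (hA : FirstIndep E A₁ A₂) (hB : FirstIndep E B₁ B₂)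
    (heq : hypA E A₁ A₂ ∩ dualEdgeCone E = hypA E B₁ B₂ ∩ dualEdgeCone E) :
    A₁ = B₁ ∧ A₂ = B₂ := by
  obtain ⟨hAstar, hAcomp⟩ := hA
  obtain ⟨hBstar, hBcomp⟩ := hB
  by_cases hAe : A₁ = ∅
  · obtain ⟨hassocA, hhypA, hA2ne, hA2u, hncA⟩ := right_facts hAstar hAe
    obtain ⟨j0, hj0⟩ := hA2ne
    obtain ⟨j1, hj1⟩ := finset_nonempty_compl hA2u
    by_cases hBe : B₁ = ∅
    · -- both right-type
      obtain ⟨hassocB, hhypB, hB2ne, hB2u, hncB⟩ := right_facts hBstar hBe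
      have htrans : ∀ i j, E i j →
          ((i ∈ nbrL E A₂ ↔ j ∈ A₂) ↔ (i ∈ nbrL E B₂ ↔ j ∈ B₂)) := by
        intro i j hE
        have hc := gen_mem_cone hE
        have h := Set.ext_iff.mp heq (gen i j)
        rw [hhypA, hhypB] at h
        simp only [Set.mem_inter_iff, hc, and_true] at h
        rw [gen_mem_hyp2_iff, gen_mem_hyp2_iff] at h
        exact h
      obtain ⟨j2, hj2⟩ := hB2ne
      obtain ⟨j3, hj3⟩ := finset_nonempty_compl hB2u
      rcases profiles_match hassocA htrans hAcomp
          ⟨inr j0, hj0⟩ (by rw [sideSet_compl]; exact ⟨inr j1, hj1⟩)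
          ⟨inr j2, hj2⟩ (by rw [sideSet_compl]; exact ⟨inr j3, hj3⟩) with
        ⟨hP, hQ⟩ | ⟨hP, hQ⟩
      · exact ⟨hAe.trans hBe.symm, hQ.symm⟩
      · exfalso
        have hclE : Cl (toGraph E) (sideSet (nbrL E A₂) A₂) := by
          apply cl_sideSet
          intro i j hE
          constructor
          · intro hi
            by_contra hj
            have hjB : j ∈ B₂ := by rw [hQ]; exact Finset.mem_compl.mpr hj
            have hi' : i ∈ nbrL E B₂ := mem_nbrL hjB hE
            rw [hP] at hi'
            exact Finset.mem_compl.mp hi' hi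
          · intro hj; exact mem_nbrL hj hE
        exact conn_no_closed hconn hclE ⟨inr j0, hj0⟩
          (by rw [sideSet_compl]; exact ⟨inr j1, hj1⟩)
    · -- A right-type, B left-type: contradiction
      exfalso
      obtain ⟨hassocB, hhypB, hB1ne, hB1u, _⟩ := left_facts hBstar hBe
      have htrans : ∀ i j, E i j →
          ((i ∈ nbrL E A₂ ↔ j ∈ A₂) ↔ (i ∈ B₁ ↔ j ∈ nbrR E B₁)) := by
        intro i j hE
        have hc := gen_mem_cone hE
        have h := Set.ext_iff.mp heq (gen i j)
        rw [hhypA, hhypB] at h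
        simp only [Set.mem_inter_iff, hc, and_true] at h
        rw [gen_mem_hyp2_iff, gen_mem_hyp1_iff] at h
        exact h
      obtain ⟨i2, hi2⟩ := hB1ne
      obtain ⟨i3, hi3⟩ := finset_nonempty_compl hB1u
      rcases profiles_match hassocA htrans hAcomp
          ⟨inr j0, hj0⟩ (by rw [sideSet_compl]; exact ⟨inr j1, hj1⟩)
          ⟨inl i2, hi2⟩ (by rw [sideSet_compl]; exact ⟨inl i3, hi3⟩) with
        ⟨hP, hQ⟩ | ⟨hP, hQ⟩
      · -- B₁ = nbrL A₂, nbrR B₁ = A₂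
        refine hncA ⟨B₁ᶜ, A₂,
          ⟨finset_nonempty_compl hB1u, compl_ne_univ_of_nonempty ⟨i2, hi2⟩,
            ⟨j0, hj0⟩, hA2u, ?_⟩, subset_rfl⟩
        intro i hi j hj hE
        have : i ∈ B₁ := by rw [hP]; exact mem_nbrL hj hE
        exact Finset.mem_compl.mp hi this
      · -- B₁ = (nbrL A₂)ᶜ, nbrR B₁ = A₂ᶜ
        refine hncA ⟨B₁, A₂,
          ⟨⟨i2, hi2⟩, hB1u, ⟨j0, hj0⟩, hA2u, ?_⟩, subset_rfl⟩
        intro i hi j hj hE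
        have : j ∈ A₂ᶜ := by rw [← hQ]; exact mem_nbrR hi hE
        exact Finset.mem_compl.mp this hj
  · obtain ⟨hassocA, hhypA, hA1ne, hA1u, hbrA⟩ := left_facts hAstar hAe
    obtain ⟨i0, hi0⟩ := hA1ne
    obtain ⟨i1, hi1⟩ := finset_nonempty_compl hA1u
    by_cases hBe : B₁ = ∅
    · -- A left-type, B right-type: contradiction
      exfalso
      obtain ⟨hassocB, hhypB, hB2ne, hB2u, hncB⟩ := right_facts hBstar hBe
      have htrans : ∀ i j, E i j →
          ((i ∈ A₁ ↔ j ∈ nbrR E A₁) ↔ (i ∈ nbrL E B₂ ↔ j ∈ B₂)) := by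
        intro i j hE
        have hc := gen_mem_cone hE
        have h := Set.ext_iff.mp heq (gen i j)
        rw [hhypA, hhypB] at h
        simp only [Set.mem_inter_iff, hc, and_true] at h
        rw [gen_mem_hyp1_iff, gen_mem_hyp2_iff] at h
        exact h
      obtain ⟨j2, hj2⟩ := hB2ne
      obtain ⟨j3, hj3⟩ := finset_nonempty_compl hB2u
      rcases profiles_match hassocA htrans hAcomp
          ⟨inl i0, hi0⟩ (by rw [sideSet_compl]; exact ⟨inl i1, hi1⟩)
          ⟨inr j2, hj2⟩ (by rw [sideSet_compl]; exact ⟨inr j3, hj3⟩) with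
        ⟨hP, hQ⟩ | ⟨hP, hQ⟩
      · -- nbrL B₂ = A₁, B₂ = nbrR A₁
        refine hncB ⟨A₁ᶜ, B₂,
          ⟨finset_nonempty_compl hA1u, compl_ne_univ_of_nonempty ⟨i0, hi0⟩,
            ⟨j2, hj2⟩, hB2u, ?_⟩, subset_rfl⟩
        intro i hi j hj hE
        have : i ∈ A₁ := by rw [← hP]; exact mem_nbrL hj hE
        exact Finset.mem_compl.mp hi this
      · -- nbrL B₂ = A₁ᶜ, B₂ = (nbrR A₁)ᶜ
        refine hncB ⟨A₁, B₂,
          ⟨⟨i0, hi0⟩, hA1u, ⟨j2, hj2⟩, hB2u, ?_⟩, subset_rfl⟩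
        intro i hi j hj hE
        rw [hQ] at hj
        exact Finset.mem_compl.mp hj (mem_nbrR hi hE)
    · -- both left-type
      obtain ⟨hassocB, hhypB, hB1ne, hB1u, hbrB⟩ := left_facts hBstar hBe
      have htrans : ∀ i j, E i j →
          ((i ∈ A₁ ↔ j ∈ nbrR E A₁) ↔ (i ∈ B₁ ↔ j ∈ nbrR E B₁)) := by
        intro i j hE
        have hc := gen_mem_cone hE
        have h := Set.ext_iff.mp heq (gen i j)
        rw [hhypA, hhypB] at h
        simp only [Set.mem_inter_iff, hc, and_true] at h
        rw [gen_mem_hyp1_iff, gen_mem_hyp1_iff] at h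
        exact h
      obtain ⟨i2, hi2⟩ := hB1ne
      obtain ⟨i3, hi3⟩ := finset_nonempty_compl hB1u
      rcases profiles_match hassocA htrans hAcomp
          ⟨inl i0, hi0⟩ (by rw [sideSet_compl]; exact ⟨inl i1, hi1⟩)
          ⟨inl i2, hi2⟩ (by rw [sideSet_compl]; exact ⟨inl i3, hi3⟩) with
        ⟨hP, hQ⟩ | ⟨hP, hQ⟩
      · -- B₁ = A₁, nbrR B₁ = nbrR A₁
        refine ⟨hP.symm, ?_⟩
        rcases hbrA with hmaxA | ⟨hA2e, hncA⟩ <;>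
          rcases hbrB with hmaxB | ⟨hB2e, hncB⟩
        · rw [maxIndep_right hmaxA, maxIndep_right hmaxB, hQ]
        · exact absurd ⟨A₁, A₂, hmaxA.1, hP ▸ subset_rfl⟩ hncB
        · exact absurd ⟨B₁, B₂, hmaxB.1, hP ▸ subset_rfl⟩ hncA
        · rw [hA2e, hB2e]
      · -- B₁ = A₁ᶜ, nbrR B₁ = (nbrR A₁)ᶜ
        exfalso
        have hclE : Cl (toGraph E) (sideSet A₁ (nbrR E A₁)) := by
          apply cl_sideSet
          intro i j hE
          constructor
          · intro hi; exact mem_nbrR hi hE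
          · intro hj
            by_contra hi
            have hiB : i ∈ B₁ := by rw [hP]; exact Finset.mem_compl.mpr hi
            have hj' : j ∈ nbrR E B₁ := mem_nbrR hiB hE
            rw [hQ] at hj'
            exact Finset.mem_compl.mp hj' hj
        exact conn_no_closed hconn hclE ⟨inl i0, hi0⟩
          (by rw [sideSet_compl]; exact ⟨inl i1, hi1⟩)


end ToricBipartite
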